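/- Let d ≥ 1. Define the 2d×2d matrices (1-based indices): M by M_{jk} = binom(2d−j, k−1) if j + k ≤ 2d+1 and 0 otherwise; T by T_{1,k} = (−1)^{k+1}·binom(2d, 2d−k) for 1 ≤ k ≤ 2d, T_{j,j−1} = 1 for 2 ≤ j ≤ 2d, and all other entries 0; and the Jordan block J = 1_{2d} + N where N_{j,j+1} = 1 for 1 ≤ j ≤ 2d−1 and all other entries of N are 0. Then T·M = M·J; in particular M⁻¹·T·M = J, i.e. T is conjugate to a single 2d×2d Jordan block with eigenvalue 1. -/

import Mathlib

open Matrix Finset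

-- key alternating sum identity
lemma key_sum (n k : ℕ) (hk : k < n) :
    ∑ m ∈ Finset.range (n+1), (-1:ℤ)^m * (n.choose m) * (m.choose k) = 0 := by
  have h1 : ∑ m ∈ Finset.range (n+1), (-1:ℤ)^m * (n.choose m) * (m.choose k)
      = ∑ m ∈ Finset.Ico k (n+1), (-1:ℤ)^m * (n.choose m) * (m.choose k) := by
    rw [Finset.range_eq_Ico, ← Finset.sum_Ico_consecutive _ (Nat.zero_le k) (by omega)]
    have h0 : ∑ m ∈ Finset.Ico 0 k, (-1:ℤ)^m * (n.choose m) * (m.choose k) = 0 :=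
      Finset.sum_eq_zero fun m hm => by
        simp [Nat.choose_eq_zero_of_lt (Finset.mem_Ico.mp hm).2]
    rw [h0, zero_add]
  rw [h1, Finset.sum_Ico_eq_sum_range]
  have h2 : ∀ j ∈ Finset.range (n + 1 - k),
      (-1:ℤ)^(k+j) * (n.choose (k+j)) * ((k+j).choose k)
        = ((-1:ℤ)^k * n.choose k) * ((-1:ℤ)^j * ((n-k).choose j)) := by
    intro j hj
    have hj' : j ≤ n - k := by simp at hj; omega
    have := Nat.choose_mul (n := n) (Nat.le_add_right k j)
    have hc : (n.choose (k+j) : ℤ) * ((k+j).choose k) = (n.choose k) * ((n-k).choose j) := by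
      have h3 : k + j - k = j := by omega
      rw [← Nat.cast_mul, this, h3, Nat.cast_mul]
    rw [pow_add]
    linear_combination ((-1:ℤ)^k * (-1:ℤ)^j) * hc
  rw [Finset.sum_congr rfl h2, ← Finset.mul_sum]
  have h4 : n + 1 - k = (n - k) + 1 := by omega
  rw [h4, Int.alternating_sum_range_choose_of_ne (by omega)]
  ring

/-- The companion-type transfer matrix `T` at the band edge is conjugated by the
Pascal matrix `M` into a single Jordan block `J` with eigenvalue `1`:
`T·M = M·J`, hence `M⁻¹·T·M = J`. -/
theorem stmt_14 {d : ℕ} (hd : 1 ≤ d)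
    (M T J Nn : Matrix (Fin (2 * d)) (Fin (2 * d)) ℤ)
    (hM : M = Matrix.of fun j k : Fin (2 * d) =>
      if (j : ℕ) + 1 + ((k : ℕ) + 1) ≤ 2 * d + 1 then
        (Nat.choose (2 * d - ((j : ℕ) + 1)) (k : ℕ) : ℤ)
      else 0)
    (hT : T = Matrix.of fun j k : Fin (2 * d) =>
      if (j : ℕ) = 0 then
        (-1 : ℤ) ^ (((k : ℕ) + 1) + 1) *
          (Nat.choose (2 * d) (2 * d - ((k : ℕ) + 1)) : ℤ)
      else if (k : ℕ) + 1 = (j : ℕ) then 1 else 0)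
    (hNn : Nn = Matrix.of fun j k : Fin (2 * d) =>
      if (j : ℕ) + 1 = (k : ℕ) then (1 : ℤ) else 0)
    (hJ : J = 1 + Nn) :
    T * M = M * J ∧ M⁻¹ * T * M = J := by
  have hn2 : 2 ≤ 2 * d := by omega
  -- simplified form of M
  have hM' : ∀ j k : Fin (2 * d), M j k = (((2 * d) - 1 - (j : ℕ)).choose (k : ℕ) : ℤ) := by
    intro j k
    have hj := j.isLt
    have hk := k.isLt
    rw [hM, Matrix.of_apply]
    split_ifs with h
    · have e : (2 * d) - ((j : ℕ) + 1) = (2 * d) - 1 - (j : ℕ) := by omega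
      rw [e]
    · have hlt : (2 * d) - 1 - (j : ℕ) < (k : ℕ) := by omega
      rw [Nat.choose_eq_zero_of_lt hlt, Nat.cast_zero]
  -- M * J entries
  have hMJ : ∀ j k : Fin (2 * d), (M * J) j k = (((2 * d) - (j : ℕ)).choose (k : ℕ) : ℤ) := by
    intro j k
    have hj := j.isLt
    have hk := k.isLt
    rw [Matrix.mul_apply]
    have hterm : ∀ l : Fin (2 * d), M j l * J l k =
        (if l = k then M j l else 0) + (if (l : ℕ) + 1 = (k : ℕ) then M j l else 0) := by
      intro l
      rw [hJ, hNn, Matrix.add_apply, Matrix.one_apply, Matrix.of_apply]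
      by_cases h1 : l = k <;> by_cases h2 : (l : ℕ) + 1 = (k : ℕ) <;> simp [h1, h2]
    rw [Finset.sum_congr rfl (fun l _ => hterm l), Finset.sum_add_distrib,
      Finset.sum_ite_eq' Finset.univ k (fun l => M j l)]
    simp only [Finset.mem_univ, if_true]
    by_cases hk0 : (k : ℕ) = 0
    · have hz : ∑ l : Fin (2 * d), (if (l : ℕ) + 1 = (k : ℕ) then M j l else 0) = 0 :=
        Finset.sum_eq_zero fun l _ => by rw [if_neg (by omega)]
      rw [hz, add_zero, hM' j k, hk0, Nat.choose_zero_right, Nat.choose_zero_right]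
    · set k1 : Fin (2 * d) := ⟨(k : ℕ) - 1, by omega⟩ with hk1
      have hcond : ∀ l : Fin (2 * d), (if (l : ℕ) + 1 = (k : ℕ) then M j l else 0) =
          (if l = k1 then M j l else 0) := by
        intro l
        refine if_congr ?_ rfl rfl
        rw [Fin.ext_iff]
        simp only [hk1]
        omega
      rw [Finset.sum_congr rfl (fun l _ => hcond l),
        Finset.sum_ite_eq' Finset.univ k1 (fun l => M j l)]
      simp only [Finset.mem_univ, if_true]
      rw [hM' j k, hM' j k1]
      have hv : (k1 : ℕ) = (k : ℕ) - 1 := rfl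
      rw [hv]
      have e1 : (2 * d) - (j : ℕ) = ((2 * d) - 1 - (j : ℕ)) + 1 := by omega
      have e2 : (k : ℕ) = ((k : ℕ) - 1) + 1 := by omega
      rw [e1, e2, Nat.choose_succ_succ']
      push_cast
      ring
  -- the key row-0 sum
  have hrow0 : ∀ k0 : ℕ, k0 < (2 * d) →
      ∑ l ∈ Finset.range (2 * d), (-1 : ℤ) ^ (l + 1 + 1) * ((2 * d).choose ((2 * d) - (l + 1))) *
        (((2 * d) - 1 - l).choose k0) = ((2 * d).choose k0 : ℤ) := by
    intro k0 hk0
    rw [← Finset.sum_range_reflect]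
    have hterm : ∀ m ∈ Finset.range (2 * d),
        (-1 : ℤ) ^ (((2 * d) - 1 - m) + 1 + 1) * ((2 * d).choose ((2 * d) - (((2 * d) - 1 - m) + 1))) *
          (((2 * d) - 1 - ((2 * d) - 1 - m)).choose k0)
        = -((-1 : ℤ) ^ m * ((2 * d).choose m) * (m.choose k0)) := by
      intro m hm
      rw [Finset.mem_range] at hm
      have e1 : (2 * d) - (((2 * d) - 1 - m) + 1) = m := by omega
      have e2 : (2 * d) - 1 - ((2 * d) - 1 - m) = m := by omega
      rw [e1, e2]
      have hE : (-1 : ℤ) ^ (((2 * d) - 1 - m) + 1 + 1) * (-1 : ℤ) ^ m = -1 := by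
        rw [← pow_add]
        have e3 : ((2 * d) - 1 - m) + 1 + 1 + m = 2 * d + 1 := by omega
        rw [e3]
        exact Odd.neg_one_pow ⟨d, by ring⟩
      have hsq : (-1 : ℤ) ^ m * (-1 : ℤ) ^ m = 1 := by
        rw [← pow_add]
        exact Even.neg_one_pow ⟨m, rfl⟩
      have hgoal : (-1 : ℤ) ^ (((2 * d) - 1 - m) + 1 + 1) = -(-1 : ℤ) ^ m := by
        linear_combination (-1 : ℤ) ^ m * hE - (-1 : ℤ) ^ (((2 * d) - 1 - m) + 1 + 1) * hsq
      rw [hgoal]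
      ring
    rw [Finset.sum_congr rfl hterm, Finset.sum_neg_distrib]
    have hfull := key_sum (2 * d) k0 hk0
    rw [Finset.sum_range_succ] at hfull
    have hlast : (-1 : ℤ) ^ (2 * d) * ((2 * d).choose (2 * d)) * ((2 * d).choose k0) = ((2 * d).choose k0 : ℤ) := by
      rw [Nat.choose_self]
      have : (-1 : ℤ) ^ (2 * d) = 1 := Even.neg_one_pow ⟨d, by omega⟩
      rw [this]
      push_cast
      ring
    rw [hlast] at hfull
    linarith
  -- T * M entries equal M * J entries
  have hTM : T * M = M * J := by
    ext j k
    have hj := j.isLt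
    have hk := k.isLt
    rw [hMJ j k, Matrix.mul_apply]
    by_cases hj0 : (j : ℕ) = 0
    · have hterm : ∀ l : Fin (2 * d), T j l * M l k =
          (-1 : ℤ) ^ ((l : ℕ) + 1 + 1) * ((2 * d).choose ((2 * d) - ((l : ℕ) + 1))) *
            (((2 * d) - 1 - (l : ℕ)).choose (k : ℕ)) := by
        intro l
        rw [hT, Matrix.of_apply, if_pos hj0, hM' l k]
      rw [Finset.sum_congr rfl (fun l _ => hterm l)]
      rw [Fin.sum_univ_eq_sum_range
        (fun l => (-1 : ℤ) ^ (l + 1 + 1) * ((2 * d).choose ((2 * d) - (l + 1))) *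
          (((2 * d) - 1 - l).choose (k : ℕ))) (2 * d)]
      rw [hrow0 (k : ℕ) hk, hj0, Nat.sub_zero]
    · set j1 : Fin (2 * d) := ⟨(j : ℕ) - 1, by omega⟩ with hj1
      have hterm : ∀ l : Fin (2 * d), T j l * M l k = (if l = j1 then M l k else 0) := by
        intro l
        rw [hT, Matrix.of_apply, if_neg hj0]
        have : ((l : ℕ) + 1 = (j : ℕ)) ↔ l = j1 := by
          rw [Fin.ext_iff]; simp only [hj1]; omega
        by_cases h : l = j1
        · rw [if_pos (this.mpr h), if_pos h, one_mul]
        · rw [if_neg (fun hc => h (this.mp hc)), if_neg h, zero_mul]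
      rw [Finset.sum_congr rfl (fun l _ => hterm l),
        Finset.sum_ite_eq' Finset.univ j1 (fun l => M l k)]
      simp only [Finset.mem_univ, if_true]
      rw [hM' j1 k]
      have e : (2 * d) - 1 - (j1 : ℕ) = (2 * d) - (j : ℕ) := by
        have : (j1 : ℕ) = (j : ℕ) - 1 := rfl
        omega
      rw [e]
  -- invertibility of M
  have hdet : IsUnit M.det := by
    have htri : (M.submatrix id ⇑(Fin.revPerm : Equiv.Perm (Fin (2 * d)))).BlockTriangular id := by
      intro a b hab
      simp only [Matrix.submatrix_apply, id_eq, Fin.revPerm_apply]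
      rw [hM']
      have hb : ((Fin.rev b : Fin (2 * d)) : ℕ) = (2 * d) - (b + 1) := Fin.val_rev b
      have ha := a.isLt
      have hb2 := b.isLt
      have : (2 * d) - 1 - (a : ℕ) < ((Fin.rev b : Fin (2 * d)) : ℕ) := by
        simp only [id_eq] at hab
        omega
      rw [Nat.choose_eq_zero_of_lt this, Nat.cast_zero]
    have hU : (M.submatrix id ⇑(Fin.revPerm : Equiv.Perm (Fin (2 * d)))).det = 1 := by
      rw [Matrix.det_of_upperTriangular htri]
      apply Finset.prod_eq_one
      intro i _
      simp only [Matrix.submatrix_apply, id_eq, Fin.revPerm_apply]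
      rw [hM']
      have hi : ((Fin.rev i : Fin (2 * d)) : ℕ) = (2 * d) - ((i : ℕ) + 1) := Fin.val_rev i
      have := i.isLt
      rw [hi]
      have e : (2 * d) - ((i : ℕ) + 1) = (2 * d) - 1 - (i : ℕ) := by omega
      rw [e, Nat.choose_self, Nat.cast_one]
    have hperm := Matrix.det_permute' (Fin.revPerm : Equiv.Perm (Fin (2 * d))) M
    rw [hU] at hperm
    exact IsUnit.of_mul_eq_one (a := M.det) _ (by rw [mul_comm]; exact hperm.symm)
  refine ⟨hTM, ?_⟩
  rw [mul_assoc, hTM, ← mul_assoc, Matrix.nonsing_inv_mul M hdet, one_mul]
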